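/- Let n ≥ 2 be an integer and let Γ be a connected bipartite n-regular simple graph on 2m vertices. If λ₂(Γ) ≤ √(n−1), then m ≤ 1 + n(n−1)/(n − λ₂(Γ)²). -/

import Mathlib

open Polynomial Matrix

section Aux
variable {N : ℕ}

lemma charpoly_conj_aux (P B Q : Matrix (Fin N) (Fin N) ℝ) (hPQ : P * Q = 1) (hQP : Q * P = 1) :
    (P * B * Q).charpoly = B.charpoly := by
  have hc : (P.map C) * (Q.map C) = 1 := by
    rw [← Matrix.map_mul, hPQ]; simp
  have hmap : charmatrix (P * B * Q) = (P.map C) * charmatrix B * (Q.map C) := by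
    simp only [charmatrix, Matrix.mul_sub, Matrix.sub_mul]
    congr 1
    · have := (Matrix.scalar_commute (X : ℝ[X]) (Commute.all X) (P.map C)).symm
      calc (scalar (Fin N)) (X : ℝ[X]) = (scalar (Fin N)) X * ((P.map C) * (Q.map C)) := by
            rw [hc, mul_one]
        _ = P.map C * (scalar (Fin N)) X * Q.map C := by
            rw [← mul_assoc, ← this]
    · simp only [RingHom.mapMatrix_apply, Matrix.map_mul]
  have hc' : (Q.map C) * (P.map C) = 1 := by
    rw [← Matrix.map_mul, hQP]; simp
  have hdet : (charmatrix (P * B * Q)).det = (charmatrix B).det := by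
    rw [hmap, det_mul, det_mul, mul_comm, ← mul_assoc, ← det_mul, hc']
    simp
  simpa [Matrix.charpoly] using hdet

lemma charpoly_diagonal (d : Fin N → ℝ) :
    (Matrix.diagonal d).charpoly = ∏ i, (X - C (d i)) := by
  have : charmatrix (Matrix.diagonal d) = Matrix.diagonal (fun i => X - C (d i)) := by
    ext i j
    by_cases h : i = j
    · subst h; simp
    · simp [charmatrix_apply_ne _ _ _ h, Matrix.diagonal_apply_ne _ h, Matrix.diagonal_apply_ne d h]
  rw [Matrix.charpoly, this, Matrix.det_diagonal]


lemma herm_charpoly (A : Matrix (Fin N) (Fin N) ℝ) (hA : A.IsHermitian) :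
    A.charpoly = ∏ i, (X - C (hA.eigenvalues i)) := by
  have hst := hA.spectral_theorem
  have hd : (RCLike.ofReal ∘ hA.eigenvalues : Fin N → ℝ) = hA.eigenvalues := by
    ext i; simp [RCLike.ofReal]
  rw [hd] at hst
  simp only [Unitary.conjStarAlgAut_apply, Unitary.coe_star] at hst
  set U : Matrix (Fin N) (Fin N) ℝ := (hA.eigenvectorUnitary : Matrix (Fin N) (Fin N) ℝ)
  have hUs : U * star U = 1 := (Matrix.mem_unitaryGroup_iff).mp hA.eigenvectorUnitary.2
  have hsU : star U * U = 1 := (Matrix.mem_unitaryGroup_iff').mp hA.eigenvectorUnitary.2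
  conv_lhs => rw [hst]
  rw [charpoly_conj_aux U _ (star U) hUs hsU, charpoly_diagonal]

lemma herm_trace_sq (A : Matrix (Fin N) (Fin N) ℝ) (hA : A.IsHermitian) :
    Matrix.trace (A * A) = ∑ i, hA.eigenvalues i ^ 2 := by
  have hst := hA.spectral_theorem
  have hd : (RCLike.ofReal ∘ hA.eigenvalues : Fin N → ℝ) = hA.eigenvalues := by
    ext i; simp [RCLike.ofReal]
  rw [hd] at hst
  set U : Matrix (Fin N) (Fin N) ℝ := (hA.eigenvectorUnitary : Matrix (Fin N) (Fin N) ℝ)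
  have hUs : U * star U = 1 := (Matrix.mem_unitaryGroup_iff).mp hA.eigenvectorUnitary.2
  have hsU : star U * U = 1 := (Matrix.mem_unitaryGroup_iff').mp hA.eigenvectorUnitary.2
  set D := Matrix.diagonal hA.eigenvalues with hD
  have h2 : A * A = U * (D * D) * star U := by
    conv_lhs => rw [hst]
    calc U * D * star U * (U * D * star U)
        = U * D * (star U * U) * D * star U := by noncomm_ring
      _ = U * (D * D) * star U := by rw [hsU]; noncomm_ring
  rw [h2, Matrix.trace_mul_cycle, ← mul_assoc, hsU, one_mul, hD,
    Matrix.diagonal_mul_diagonal, Matrix.trace_diagonal]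
  exact Finset.sum_congr rfl (fun i _ => (sq _).symm)

lemma eval_charpoly_eq (A : Matrix (Fin N) (Fin N) ℝ) (x : ℝ) :
    A.charpoly.eval x = (x • (1 : Matrix (Fin N) (Fin N) ℝ) - A).det := by
  rw [Matrix.charpoly, ← coe_evalRingHom, RingHom.map_det]
  congr 1
  ext i j
  by_cases h : i = j
  · subst h
    simp [charmatrix_apply_eq, Matrix.one_apply]
  · simp [charmatrix_apply_ne _ _ _ h, Matrix.one_apply_ne h]

lemma exists_eigvec (A : Matrix (Fin N) (Fin N) ℝ) (x : ℝ) (hx : A.charpoly.IsRoot x) :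
    ∃ v : Fin N → ℝ, v ≠ 0 ∧ A *ᵥ v = x • v := by
  have hdet : (x • (1 : Matrix (Fin N) (Fin N) ℝ) - A).det = 0 := by
    rw [← eval_charpoly_eq]; exact hx
  obtain ⟨v, hv0, hv⟩ := (Matrix.exists_mulVec_eq_zero_iff).2 hdet
  refine ⟨v, hv0, ?_⟩
  have := hv
  rw [Matrix.sub_mulVec, Matrix.smul_mulVec, Matrix.one_mulVec, sub_eq_zero] at this
  exact this.symm

lemma eig_abs_le {n : ℕ} (Γ : SimpleGraph (Fin N)) [DecidableRel Γ.Adj]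
    (hreg : Γ.IsRegularOfDegree n) (x : ℝ) (v : Fin N → ℝ) (hv : v ≠ 0)
    (h : Γ.adjMatrix ℝ *ᵥ v = x • v) : |x| ≤ n := by
  have hNe : (Finset.univ : Finset (Fin N)).Nonempty := by
    rcases Function.ne_iff.1 hv with ⟨k, hk⟩
    exact ⟨k, Finset.mem_univ k⟩
  obtain ⟨i0, -, hi0⟩ := Finset.exists_max_image Finset.univ (fun i => |v i|) hNe
  have hpos : 0 < |v i0| := by
    rcases Function.ne_iff.1 hv with ⟨k, hk⟩
    have : 0 < |v k| := abs_pos.2 hk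
    exact lt_of_lt_of_le this (hi0 k (Finset.mem_univ k))
  have key : |x| * |v i0| ≤ n * |v i0| := by
    have h1 : (Γ.adjMatrix ℝ *ᵥ v) i0 = ∑ j ∈ Γ.neighborFinset i0, v j :=
      Γ.adjMatrix_mulVec_apply _ _
    have h2 : x * v i0 = ∑ j ∈ Γ.neighborFinset i0, v j := by
      rw [← h1, h]; rfl
    calc |x| * |v i0| = |x * v i0| := (abs_mul x (v i0)).symm
      _ = |∑ j ∈ Γ.neighborFinset i0, v j| := by rw [h2]
      _ ≤ ∑ j ∈ Γ.neighborFinset i0, |v j| := Finset.abs_sum_le_sum_abs _ _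
      _ ≤ ∑ _j ∈ Γ.neighborFinset i0, |v i0| :=
          Finset.sum_le_sum (fun j _ => hi0 j (Finset.mem_univ j))
      _ = n * |v i0| := by
          rw [Finset.sum_const, nsmul_eq_mul]
          congr 1
          exact_mod_cast congrArg Nat.cast (hreg i0)
  exact le_of_mul_le_mul_right key hpos

lemma roots_prod_fin (g : Fin N → ℝ) :
    (∏ i, (X - C (g i))).roots = Finset.univ.val.map g := by
  have h : ∏ i, (X - C (g i)) = ((Finset.univ.val.map g).map (fun a => X - C a)).prod := by
    rw [Multiset.map_map]; rfl
  rw [h, roots_multiset_prod_X_sub_C]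

lemma multiset_neg_symm (hNe : Even N) (A : Matrix (Fin N) (Fin N) ℝ) (e : Fin N → ℝ)
    (hchar : A.charpoly = ∏ i, (X - C (e i))) (hneg : (-A).charpoly = A.charpoly) :
    (Finset.univ.val.map e) = (Finset.univ.val.map (fun i => -e i)) := by
  set ψ : ℝ[X] →+* ℝ[X] := eval₂RingHom C (-X) with hψ
  have hψX : ψ X = -X := by simp [hψ]
  have hψC : ∀ a : ℝ, ψ (C a) = C a := by intro a; simp [hψ]
  have hmap : (charmatrix A).map ψ = -(charmatrix (-A)) := by
    ext i j
    by_cases h : i = j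
    · subst h
      simp [charmatrix_apply_eq, map_sub, hψX, hψC]
      ring
    · simp [charmatrix_apply_ne _ _ _ h, hψC]
  have h1 : ψ A.charpoly = A.charpoly := by
    rw [Matrix.charpoly, RingHom.map_det, RingHom.mapMatrix_apply, hmap, Matrix.det_neg,
      ← Matrix.charpoly, hneg]
    simp [hNe.neg_one_pow]
    rw [Matrix.charpoly]
  have h2 : ψ (∏ i, (X - C (e i))) = ∏ i, (X - C (-e i)) := by
    rw [map_prod]
    have : ∀ i : Fin N, ψ (X - C (e i)) = -(X - C (-e i)) := by
      intro i; rw [map_sub, hψX, hψC, map_neg]; ring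
    rw [Finset.prod_congr rfl (fun i _ => this i)]
    calc ∏ i : Fin N, -(X - C (-e i))
        = ∏ i : Fin N, ((-1 : ℝ[X]) * (X - C (-e i))) := by simp [neg_one_mul]
      _ = (∏ _i : Fin N, (-1 : ℝ[X])) * ∏ i, (X - C (-e i)) := Finset.prod_mul_distrib
      _ = ∏ i, (X - C (-e i)) := by
          rw [Finset.prod_const]
          simp [Finset.card_univ, hNe.neg_one_pow]
  have h3 : ∏ i, (X - C (e i)) = ∏ i, (X - C (-e i)) := by
    rw [← h2, ← hchar, h1, hchar]
  have := congrArg Polynomial.roots h3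
  rwa [roots_prod_fin, roots_prod_fin] at this

lemma symm_pointwise (e : Fin N → ℝ) (hmono : Antitone e)
    (hms : Finset.univ.val.map e = Finset.univ.val.map (fun i => -e i)) :
    ∀ i : Fin N, e i = -e i.rev := by
  set f : Fin N → ℝ := fun i => -e i.rev with hf
  have hms2 : Finset.univ.val.map f = Finset.univ.val.map e := by
    have hrev : (Finset.univ.val.map (Fin.rev : Fin N → Fin N)) = Finset.univ.val := by
      have := Finset.map_univ_equiv (Fin.revPerm : Equiv.Perm (Fin N))
      calc Finset.univ.val.map (Fin.rev : Fin N → Fin N)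
          = (Finset.univ.map (Fin.revPerm : Equiv.Perm (Fin N)).toEmbedding).val := by
            rw [Finset.map_val]; rfl
        _ = Finset.univ.val := by rw [this]
    calc Finset.univ.val.map f
        = (Finset.univ.val.map (Fin.rev : Fin N → Fin N)).map (fun i => -e i) := by
          rw [Multiset.map_map]; rfl
      _ = Finset.univ.val.map (fun i => -e i) := by rw [hrev]
      _ = Finset.univ.val.map e := hms.symm
  have hperm : List.Perm (List.ofFn f) (List.ofFn e) := by
    rw [Fin.univ_val_map, Fin.univ_val_map] at hms2
    exact Multiset.coe_eq_coe.mp hms2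
  have hs1 : (List.ofFn e).Pairwise (fun a b : ℝ => b ≤ a) := by
    rw [List.pairwise_ofFn]
    intro i j hij
    exact hmono hij.le
  have hs2 : (List.ofFn f).Pairwise (fun a b : ℝ => b ≤ a) := by
    rw [List.pairwise_ofFn]
    intro i j hij
    simp only [hf, neg_le_neg_iff]
    exact hmono (Fin.rev_lt_rev.mpr hij).le
  have : List.ofFn e = List.ofFn f :=
    hperm.symm.eq_of_pairwise (fun _ _ _ _ h1 h2 => le_antisymm h2 h1) hs1 hs2
  have hef : e = f := List.ofFn_injective this
  intro i
  exact congrFun hef i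

end Aux

/-- Corollary (Høholdt–Justesen): a connected bipartite `n`-regular graph on `2m` vertices with
second largest adjacency eigenvalue (with multiplicity, given by the antitone enumeration `e`)
at most `√(n-1)` satisfies `m ≤ 1 + n(n-1)/(n - λ₂²)`. -/
theorem stmt9 (n m : ℕ) (hn : 2 ≤ n) (hm : 1 ≤ m)
    (Γ : SimpleGraph (Fin (2 * m))) [DecidableRel Γ.Adj]
    (hconn : Γ.Connected) (hbip : Γ.Colorable 2) (hreg : Γ.IsRegularOfDegree n)
    (e : Fin (2 * m) → ℝ) (hmono : Antitone e)
    (hchar : (Γ.adjMatrix ℝ).charpoly = ∏ i, (X - C (e i)))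
    (hlam2 : e ⟨1, by omega⟩ ≤ Real.sqrt ((n : ℝ) - 1)) :
    (m : ℝ) ≤ 1 + (n : ℝ) * ((n : ℝ) - 1) / ((n : ℝ) - (e ⟨1, by omega⟩) ^ 2) := by
  have hm2 : 2 ≤ m := by
    have h := Γ.degree_lt_card_verts ⟨0, by omega⟩
    rw [hreg ⟨0, by omega⟩, Fintype.card_fin] at h
    omega
  set A := Γ.adjMatrix ℝ with hAdef
  have hA : A.IsHermitian := by
    show Aᴴ = A
    rw [hAdef, Matrix.conjTranspose_eq_transpose_of_trivial]
    exact Γ.isSymm_adjMatrix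
  have hNe : Even (2 * m) := ⟨m, by omega⟩
  -- bipartite conjugation
  obtain ⟨c⟩ := hbip
  set d : Fin (2 * m) → ℝ := fun v => if c v = 0 then 1 else -1 with hd
  have hd2 : ∀ v, d v * d v = 1 := by
    intro v; by_cases h : c v = 0 <;> simp [hd, h]
  have hDD : Matrix.diagonal d * Matrix.diagonal d = 1 := by
    rw [Matrix.diagonal_mul_diagonal]
    have : (fun v => d v * d v) = fun _ => (1 : ℝ) := funext hd2
    rw [this, Matrix.diagonal_one]
  have hDAD : Matrix.diagonal d * A * Matrix.diagonal d = -A := by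
    ext i j
    rw [Matrix.mul_diagonal, Matrix.diagonal_mul]
    by_cases h : Γ.Adj i j
    · have hne : c i ≠ c j := c.valid h
      have hdd : d i * d j = -1 := by
        by_cases hi : c i = 0 <;> by_cases hj : c j = 0
        · exact absurd (hi.trans hj.symm) hne
        · simp [hd, hi, hj]
        · simp [hd, hi, hj]
        · have : c i = c j := by omega
          exact absurd this hne
      have hAij : A i j = 1 := by simp [hAdef, h]
      rw [Matrix.neg_apply, hAij]
      linear_combination hdd
    · have hAij : A i j = 0 := by simp [hAdef, h]
      rw [Matrix.neg_apply, hAij]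
      ring
  have hnegchar : (-A).charpoly = A.charpoly := by
    rw [← hDAD]
    exact charpoly_conj_aux _ _ _ hDD hDD
  have hms := multiset_neg_symm hNe A e hchar hnegchar
  have hsym := symm_pointwise e hmono hms
  -- roots of charpoly
  have hroots : A.charpoly.roots = Finset.univ.val.map e := by
    rw [hchar, roots_prod_fin]
  have hevms : Finset.univ.val.map hA.eigenvalues = Finset.univ.val.map e := by
    have h1 := herm_charpoly A hA
    rw [hchar] at h1
    have h2 := congrArg Polynomial.roots h1
    rw [roots_prod_fin, roots_prod_fin] at h2
    exact h2.symm
  -- sum of squares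
  have htr : Matrix.trace (A * A) = (2 * m : ℝ) * n := by
    rw [Matrix.trace]
    have : ∀ i : Fin (2 * m), (A * A).diag i = (n : ℝ) := by
      intro i
      show (A * A) i i = (n : ℝ)
      rw [Γ.adjMatrix_mul_self_apply_self i, hreg i]
    rw [Finset.sum_congr rfl (fun i _ => this i)]
    simp [Finset.card_univ]
  have hsumsq : ∑ i, e i ^ 2 = (2 * m : ℝ) * n := by
    have h1 := herm_trace_sq A hA
    have h2 : ∑ i, hA.eigenvalues i ^ 2 = ∑ i, e i ^ 2 := by
      have : ∀ g : Fin (2*m) → ℝ, ∑ i, g i ^ 2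
          = ((Finset.univ.val.map g).map (fun x : ℝ => x ^ 2)).sum := by
        intro g
        rw [Multiset.map_map]
        rfl
      rw [this, this, hevms]
    rw [← h2, ← h1, htr]
  -- n is a root
  have hnroot : A.charpoly.IsRoot (n : ℝ) := by
    rw [Polynomial.IsRoot, eval_charpoly_eq]
    apply (Matrix.exists_mulVec_eq_zero_iff).1
    refine ⟨fun _ => 1, ?_, ?_⟩
    · intro h
      have := congrFun h ⟨0, by omega⟩
      simp at this
    · ext i
      rw [Matrix.sub_mulVec, Matrix.smul_mulVec, Matrix.one_mulVec]
      have : (A *ᵥ fun _ => (1:ℝ)) i = (n : ℝ) := by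
        rw [Γ.adjMatrix_mulVec_apply]
        simp [hreg i]
      simp [this]
  have hne0 : A.charpoly ≠ 0 := (Matrix.charpoly_monic A).ne_zero
  have hmem_n : (n : ℝ) ∈ Finset.univ.val.map e := by
    rw [← hroots]
    exact (Polynomial.mem_roots hne0).2 hnroot
  obtain ⟨i, -, hi⟩ := Multiset.mem_map.1 hmem_n
  set i0 : Fin (2 * m) := ⟨0, by omega⟩ with hi0
  set i1 : Fin (2 * m) := ⟨1, by omega⟩ with hi1
  have he0_ge : (n : ℝ) ≤ e i0 := hi ▸ hmono (by simp [hi0, Fin.le_def])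
  have he0_le : e i0 ≤ n := by
    have hmem : e i0 ∈ A.charpoly.roots := by
      rw [hroots]
      exact Multiset.mem_map_of_mem e (Finset.mem_val.mpr (Finset.mem_univ i0))
    have hroot : A.charpoly.IsRoot (e i0) := (Polynomial.mem_roots hne0).1 hmem
    obtain ⟨v, hv0, hv⟩ := exists_eigvec A (e i0) hroot
    have habs := eig_abs_le Γ hreg (e i0) v hv0 hv
    exact (abs_le.1 habs).2
  have he0 : e i0 = n := le_antisymm he0_le he0_ge
  -- symmetry consequences
  have hlast : e i0.rev = -(n : ℝ) := by
    have := hsym i0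
    rw [he0] at this
    linarith
  have hrev1 : e i1.rev = -(e i1) := by
    have := hsym i1
    linarith
  have hlam_nonneg : 0 ≤ e i1 := by
    have h12 : i1 ≤ i1.rev := by
      simp [Fin.le_def, hi1, Fin.rev]
      omega
    have := hmono h12
    rw [hrev1] at this
    linarith
  have hlamsq : e i1 ^ 2 ≤ (n : ℝ) - 1 := by
    have h1 : e i1 ^ 2 ≤ Real.sqrt ((n:ℝ) - 1) ^ 2 :=
      pow_le_pow_left₀ hlam_nonneg hlam2 2
    rwa [Real.sq_sqrt (by
      have : (2:ℝ) ≤ n := by exact_mod_cast hn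
      linarith)] at h1
  -- final computation
  show (m : ℝ) ≤ 1 + (n : ℝ) * ((n : ℝ) - 1) / ((n : ℝ) - (e i1) ^ 2)
  set lam := e i1 with hlam
  have hns : (2:ℝ) ≤ n := by exact_mod_cast hn
  have hv0 : i0.val = 0 := by rw [hi0]
  have hv1 : i1.val = 1 := by rw [hi1]
  have hne01 : i0 ≠ i0.rev := by
    intro h
    have h2 := congrArg Fin.val h
    rw [Fin.val_rev, hv0] at h2
    omega
  set S : Finset (Fin (2*m)) := {i0, i0.rev} with hS
  have hSsum : ∑ i ∈ S, e i ^ 2 = (n:ℝ)^2 + (n:ℝ)^2 := by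
    rw [hS, Finset.sum_pair hne01, he0, hlast]
    ring
  have hcompl : ∀ i ∈ Sᶜ, e i ^ 2 ≤ lam ^ 2 := by
    intro i hiS
    rw [Finset.mem_compl, hS, Finset.mem_insert, Finset.mem_singleton] at hiS
    push_neg at hiS
    obtain ⟨hi0ne, hirevne⟩ := hiS
    have hup : e i ≤ lam := by
      apply hmono
      rw [Fin.le_def, hv1]
      have hne : i.val ≠ 0 := by
        intro h
        exact hi0ne (Fin.ext (by rw [h, hv0]))
      omega
    have hlow : -lam ≤ e i := by
      rw [← hrev1]
      apply hmono
      rw [Fin.le_def, Fin.val_rev, hv1]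
      have h1 : i.val ≠ 2*m - 1 := by
        intro h
        apply hirevne
        apply Fin.ext
        rw [Fin.val_rev, hv0, h]
      have := i.isLt
      omega
    exact sq_le_sq' hlow hup
  have hsum_le : ∑ i ∈ Sᶜ, e i ^ 2 ≤ ((Sᶜ.card : ℕ) : ℝ) * lam ^ 2 := by
    have := Finset.sum_le_card_nsmul Sᶜ (fun i => e i ^ 2) (lam ^ 2) hcompl
    rwa [nsmul_eq_mul] at this
  have hcard : (Sᶜ.card : ℕ) = 2*m - 2 := by
    rw [Finset.card_compl, hS, Finset.card_pair hne01]
    simp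
  have htotal : ∑ i ∈ S, e i ^ 2 + ∑ i ∈ Sᶜ, e i ^ 2 = (2 * m : ℝ) * n := by
    rw [Finset.sum_add_sum_compl]
    exact hsumsq
  have key : (2*(m:ℝ))*n ≤ 2*(n:ℝ)^2 + (2*(m:ℝ) - 2)*lam^2 := by
    have hcast : ((Sᶜ.card : ℕ) : ℝ) = 2*(m:ℝ) - 2 := by
      rw [hcard]
      push_cast [Nat.cast_sub (by omega : 2 ≤ 2*m)]
      ring
    rw [hcast] at hsum_le
    have h5 := htotal
    rw [hSsum] at h5
    nlinarith [hsum_le, h5]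
  have hpos : 0 < (n:ℝ) - lam^2 := by nlinarith [hlamsq]
  rw [← sub_le_iff_le_add']
  rw [le_div_iff₀ hpos]
  nlinarith [key, hpos]
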